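/- Let k ≥ 2 and n ≥ 1 be integers, let X = {0,1,…,n}, and set a = (n+1)^{(k−1)/(k+1)} (a real power). For each i ∈ {1,…,k} let P_i be a partition of X in which every part has size strictly less than a. Then the sum, over all k-tuples (σ_1,…,σ_k) of permutations of X, of the number of unordered pairs {x,y} of distinct elements of X such that for every i ∈ {1,…,k} the elements σ_i(x) and σ_i(y) lie in the same part of P_i, is strictly less than n^{2/(k+1)}·((n+1)!)^k, where n^{2/(k+1)} is a real power. -/

import Mathlib

open Finset Equiv

lemma key_real {x t : ℝ} (hx : 1 ≤ x) (ht0 : 0 < t) (ht1 : t < 1) :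
    (x + 1) ^ t < x ^ t + 1 := by
  have hx0 : (0:ℝ) < x := lt_of_lt_of_le one_pos hx
  have hx1 : (0:ℝ) < x + 1 := by linarith
  have h1 : (x + 1) ^ (t - 1) < x ^ (t - 1) :=
    Real.rpow_lt_rpow_of_neg hx0 (by linarith) (by linarith)
  have h2 : (x + 1) ^ (t - 1) ≤ 1 :=
    Real.rpow_le_one_of_one_le_of_nonpos (by linarith) (by linarith)
  have e1 : (x + 1) ^ t = (x + 1) ^ (t - 1) * x + (x + 1) ^ (t - 1) := by
    have := Real.rpow_add_one (ne_of_gt hx1) (t - 1)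
    rw [sub_add_cancel] at this
    rw [this]; ring
  have e2 : x ^ (t - 1) * x = x ^ t := by
    have := Real.rpow_add_one (ne_of_gt hx0) (t - 1)
    rw [sub_add_cancel] at this
    rw [this]
  rw [e1]
  have h3 : (x + 1) ^ (t - 1) * x < x ^ (t - 1) * x := mul_lt_mul_of_pos_right h1 hx0
  calc (x + 1) ^ (t - 1) * x + (x + 1) ^ (t - 1)
      < x ^ (t - 1) * x + 1 := by linarith
    _ = x ^ t + 1 := by rw [e2]

lemma exists_perm_pair {α : Type*} [DecidableEq α] {u v u' v' : α} (huv : u ≠ v) (h' : u' ≠ v') :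
    ∃ ρ : Equiv.Perm α, ρ u = u' ∧ ρ v = v' := by
  refine ⟨Equiv.swap (Equiv.swap u u' v) v' * Equiv.swap u u', ?_, ?_⟩
  · have h1 : Equiv.swap u u' v ≠ u' := by
      intro h
      have := (Equiv.swap u u').injective (h.trans (Equiv.swap_apply_left u u').symm)
      exact huv this.symm
    simp only [Perm.mul_apply, Equiv.swap_apply_left]
    exact Equiv.swap_apply_of_ne_of_ne (Ne.symm h1) h'
  · simp only [Perm.mul_apply, Equiv.swap_apply_left]

lemma fiber_card_eq {N : ℕ} {x y u v u' v' : Fin N} (huv : u ≠ v) (h' : u' ≠ v') :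
    (univ.filter fun τ : Perm (Fin N) => τ x = u ∧ τ y = v).card
    = (univ.filter fun τ : Perm (Fin N) => τ x = u' ∧ τ y = v').card := by
  obtain ⟨ρ, hρu, hρv⟩ := exists_perm_pair huv h'
  refine Finset.card_bij' (fun τ _ => ρ * τ) (fun τ _ => ρ⁻¹ * τ) ?_ ?_ ?_ ?_
  · intro τ hτ
    simp only [mem_filter, mem_univ, true_and] at hτ ⊢
    simp [Perm.mul_apply, hτ.1, hτ.2, hρu, hρv]
  · intro τ hτ
    simp only [mem_filter, mem_univ, true_and] at hτ ⊢
    constructor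
    · rw [Perm.mul_apply, hτ.1, ← hρu, Perm.inv_def, Equiv.symm_apply_apply]
    · rw [Perm.mul_apply, hτ.2, ← hρv, Perm.inv_def, Equiv.symm_apply_apply]
  · intro τ _; simp [mul_assoc]
  · intro τ _; simp [mul_assoc]

lemma perm_count {N : ℕ} {x y : Fin N} (hxy : x ≠ y) (B : Finset (Fin N × Fin N))
    (hB : B ⊆ (univ : Finset (Fin N)).offDiag) :
    (univ.filter fun τ : Perm (Fin N) => (τ x, τ y) ∈ B).card
    = B.card * (univ.filter fun τ : Perm (Fin N) => τ x = x ∧ τ y = y).card := by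
  rw [Finset.card_eq_sum_card_fiberwise (f := fun τ : Perm (Fin N) => (τ x, τ y)) (t := B)
    (s := univ.filter fun τ : Perm (Fin N) => (τ x, τ y) ∈ B)
    (fun τ hτ => Finset.mem_coe.mpr (mem_filter.mp (Finset.mem_coe.mp hτ)).2)]
  have hfib : ∀ b ∈ B, ((univ.filter fun τ : Perm (Fin N) => (τ x, τ y) ∈ B).filter
      (fun τ => (τ x, τ y) = b)).card
      = (univ.filter fun τ : Perm (Fin N) => τ x = x ∧ τ y = y).card := by
    intro b hb
    have h1 : (univ.filter fun τ : Perm (Fin N) => (τ x, τ y) ∈ B).filter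
        (fun τ => (τ x, τ y) = b) = univ.filter (fun τ : Perm (Fin N) => τ x = b.1 ∧ τ y = b.2) := by
      ext τ
      simp only [mem_filter, mem_univ, true_and, Prod.ext_iff]
      constructor
      · rintro ⟨-, h1, h2⟩; exact ⟨h1, h2⟩
      · rintro ⟨h1, h2⟩
        refine ⟨?_, h1, h2⟩
        rw [h1, h2]
        exact (show (b.1, b.2) = b from rfl) ▸ hb
    have hb12 : b.1 ≠ b.2 := (Finset.mem_offDiag.mp (hB hb)).2.2
    rw [h1, fiber_card_eq hb12 hxy]
  rw [Finset.sum_congr rfl hfib, Finset.sum_const, smul_eq_mul]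

lemma perm_total {N : ℕ} {x y : Fin N} (hxy : x ≠ y) :
    ((univ : Finset (Fin N)).offDiag).card *
      (univ.filter fun τ : Perm (Fin N) => τ x = x ∧ τ y = y).card = Nat.factorial N := by
  have h := Finset.card_eq_sum_card_fiberwise (f := fun τ : Perm (Fin N) => (τ x, τ y))
    (s := univ) (t := (univ : Finset (Fin N)).offDiag)
    (fun τ _ => Finset.mem_offDiag.mpr ⟨mem_univ _, mem_univ _, fun h => hxy (τ.injective h)⟩)
  rw [card_univ, Fintype.card_perm, Fintype.card_fin] at h
  have hfib : ∀ b ∈ (univ : Finset (Fin N)).offDiag,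
      ((univ : Finset (Perm (Fin N))).filter (fun τ => (τ x, τ y) = b)).card
      = (univ.filter fun τ : Perm (Fin N) => τ x = x ∧ τ y = y).card := by
    intro b hb
    have hb12 : b.1 ≠ b.2 := (Finset.mem_offDiag.mp hb).2.2
    have h1 : (univ : Finset (Perm (Fin N))).filter (fun τ => (τ x, τ y) = b)
        = univ.filter (fun τ : Perm (Fin N) => τ x = b.1 ∧ τ y = b.2) := by
      ext τ; simp only [mem_filter, mem_univ, true_and, Prod.ext_iff]
    rw [h1, fiber_card_eq hb12 hxy]
  rw [h, Finset.sum_congr rfl hfib, Finset.sum_const, smul_eq_mul]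


lemma pair_bound (k n : ℕ) (hn : 1 ≤ n) (a : ℝ) (ha1 : 1 ≤ a)
    (P : Fin k → Finpartition (Finset.univ : Finset (Fin (n + 1))))
    (hP : ∀ i : Fin k, ∀ p ∈ (P i).parts, ((p.card : ℝ) < a))
    (z : Fin (n + 1) × Fin (n + 1)) (hz12 : z.1 ≠ z.2) :
    ((univ.filter fun σ : Fin k → Perm (Fin (n + 1)) =>
        ∀ i : Fin k, ∃ p ∈ (P i).parts, σ i z.1 ∈ p ∧ σ i z.2 ∈ p).card : ℝ)
      ≤ ((a - 1) * (Nat.factorial (n + 1) : ℝ) / n) ^ k := by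
  have hn0 : (0 : ℝ) < n := by exact_mod_cast hn
  set F : ℝ := (Nat.factorial (n + 1) : ℝ) with hF_def
  set B : Fin k → Finset (Fin (n + 1) × Fin (n + 1)) := fun i =>
    (univ : Finset (Fin (n + 1))).offDiag.filter
      (fun b => ∃ p ∈ (P i).parts, b.1 ∈ p ∧ b.2 ∈ p) with hB_def
  set c : ℕ := (univ.filter fun τ : Perm (Fin (n + 1)) => τ z.1 = z.1 ∧ τ z.2 = z.2).card
    with hc_def
  have e0 : (univ.filter fun σ : Fin k → Perm (Fin (n + 1)) =>
        ∀ i : Fin k, ∃ p ∈ (P i).parts, σ i z.1 ∈ p ∧ σ i z.2 ∈ p)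
      = Fintype.piFinset (fun i => univ.filter fun τ : Perm (Fin (n + 1)) =>
        (τ z.1, τ z.2) ∈ B i) := by
    ext σ
    rw [mem_filter, Fintype.mem_piFinset]
    simp only [mem_filter, mem_univ, true_and]
    constructor
    · intro h i
      exact Finset.mem_filter.mpr ⟨Finset.mem_offDiag.mpr
        ⟨mem_univ _, mem_univ _, fun hh => hz12 ((σ i).injective hh)⟩, h i⟩
    · intro h i
      exact (Finset.mem_filter.mp (h i)).2
  have e1 : (univ.filter fun σ : Fin k → Perm (Fin (n + 1)) =>
        ∀ i : Fin k, ∃ p ∈ (P i).parts, σ i z.1 ∈ p ∧ σ i z.2 ∈ p).card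
      = ∏ i : Fin k, ((B i).card * c) := by
    rw [e0, Fintype.card_piFinset]
    exact Finset.prod_congr rfl fun i _ => perm_count hz12 (B i) (filter_subset _ _)
  have hc : ((n : ℝ) + 1) * (n : ℝ) * (c : ℝ) = F := by
    have h := perm_total (N := n + 1) hz12
    have hoff : ((univ : Finset (Fin (n + 1))).offDiag).card = (n + 1) * n := by
      rw [Finset.offDiag_card, card_univ, Fintype.card_fin]
      exact Nat.sub_eq_of_eq_add (by ring)
    rw [hoff] at h
    have h2 : (((n + 1) * n * c : ℕ) : ℝ) = ((Nat.factorial (n + 1) : ℕ) : ℝ) := by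
      exact_mod_cast congrArg (Nat.cast (R := ℝ)) h
    push_cast at h2
    rw [hF_def]; push_cast; linarith
  have hBcard : ∀ i, ((B i).card : ℝ) ≤ (a - 1) * ((n : ℝ) + 1) := by
    intro i
    have hsub : B i ⊆ (P i).parts.biUnion (fun p => p.offDiag) := by
      intro b hb
      rw [hB_def] at hb
      obtain ⟨hb1, p, hp, h1, h2⟩ := Finset.mem_filter.mp hb
      exact Finset.mem_biUnion.mpr ⟨p, hp, Finset.mem_offDiag.mpr
        ⟨h1, h2, (Finset.mem_offDiag.mp hb1).2.2⟩⟩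
    have h1 : (B i).card ≤ ∑ p ∈ (P i).parts, p.offDiag.card :=
      le_trans (Finset.card_le_card hsub) Finset.card_biUnion_le
    have h2 : ((B i).card : ℝ) ≤ ∑ p ∈ (P i).parts, ((p.offDiag.card : ℕ) : ℝ) := by
      exact_mod_cast h1
    refine h2.trans ?_
    have h3 : ∀ p ∈ (P i).parts, ((p.offDiag.card : ℕ) : ℝ) ≤ (a - 1) * (p.card : ℝ) := by
      intro p hp
      rw [Finset.offDiag_card]
      have hle : p.card ≤ p.card * p.card := by
        rcases Nat.eq_zero_or_pos p.card with h0 | h0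
        · simp [h0]
        · exact Nat.le_mul_of_pos_left _ h0
      rw [Nat.cast_sub hle]
      push_cast
      have hPa := hP i p hp
      have hpc : (0 : ℝ) ≤ (p.card : ℝ) := Nat.cast_nonneg _
      nlinarith
    calc ∑ p ∈ (P i).parts, ((p.offDiag.card : ℕ) : ℝ)
        ≤ ∑ p ∈ (P i).parts, (a - 1) * (p.card : ℝ) := Finset.sum_le_sum h3
      _ = (a - 1) * ((n : ℝ) + 1) := by
          rw [← Finset.mul_sum]
          congr 1
          have h4 := Finpartition.sum_card_parts (P i)
          rw [card_univ, Fintype.card_fin] at h4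
          exact_mod_cast congrArg (Nat.cast (R := ℝ)) h4
  have hc0 : (0 : ℝ) ≤ (c : ℝ) := Nat.cast_nonneg _
  have hfin : (a - 1) * ((n : ℝ) + 1) * (c : ℝ) = (a - 1) * F / n := by
    rw [← hc]; field_simp
  calc ((univ.filter fun σ : Fin k → Perm (Fin (n + 1)) =>
        ∀ i : Fin k, ∃ p ∈ (P i).parts, σ i z.1 ∈ p ∧ σ i z.2 ∈ p).card : ℝ)
      = ∏ i : Fin k, (((B i).card : ℝ) * (c : ℝ)) := by rw [e1]; push_cast; rfl
    _ ≤ ∏ _i : Fin k, ((a - 1) * ((n : ℝ) + 1) * (c : ℝ)) :=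
        Finset.prod_le_prod (fun i _ => mul_nonneg (Nat.cast_nonneg _) hc0)
          (fun i _ => mul_le_mul_of_nonneg_right (hBcard i) hc0)
    _ = ((a - 1) * ((n : ℝ) + 1) * (c : ℝ)) ^ k := by
        rw [Finset.prod_const, card_univ, Fintype.card_fin]
    _ = ((a - 1) * F / n) ^ k := by rw [hfin]

lemma ncard_le_filter (k n : ℕ) (P : Fin k → Finpartition (Finset.univ : Finset (Fin (n + 1))))
    (σ : Fin k → Perm (Fin (n + 1))) :
    ({q : Sym2 (Fin (n + 1)) | ∃ x y : Fin (n + 1), q = s(x, y) ∧ x ≠ y ∧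
        ∀ i : Fin k, ∃ p ∈ (P i).parts, σ i x ∈ p ∧ σ i y ∈ p}.ncard)
      ≤ ((((univ : Finset (Fin (n + 1) × Fin (n + 1))).filter fun z => z.1 < z.2).filter
          fun z => ∀ i : Fin k, ∃ p ∈ (P i).parts, σ i z.1 ∈ p ∧ σ i z.2 ∈ p).card) := by
  classical
  set s := (((univ : Finset (Fin (n + 1) × Fin (n + 1))).filter fun z => z.1 < z.2).filter
      fun z => ∀ i : Fin k, ∃ p ∈ (P i).parts, σ i z.1 ∈ p ∧ σ i z.2 ∈ p) with hs_def
  have hsub : {q : Sym2 (Fin (n + 1)) | ∃ x y : Fin (n + 1), q = s(x, y) ∧ x ≠ y ∧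
        ∀ i : Fin k, ∃ p ∈ (P i).parts, σ i x ∈ p ∧ σ i y ∈ p}
      ⊆ (fun z : Fin (n + 1) × Fin (n + 1) => s(z.1, z.2)) '' ↑s := by
    rintro q ⟨x, y, rfl, hxy, hC⟩
    rcases lt_or_gt_of_ne hxy with h | h
    · refine ⟨(x, y), ?_, rfl⟩
      rw [hs_def, Finset.mem_coe, mem_filter, mem_filter]
      exact ⟨⟨mem_univ _, h⟩, hC⟩
    · refine ⟨(y, x), ?_, Sym2.eq_swap⟩
      rw [hs_def, Finset.mem_coe, mem_filter, mem_filter]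
      exact ⟨⟨mem_univ _, h⟩, fun i => by
        obtain ⟨p, hp, h1, h2⟩ := hC i; exact ⟨p, hp, h2, h1⟩⟩
  calc _ ≤ ((fun z : Fin (n + 1) × Fin (n + 1) => s(z.1, z.2)) '' ↑s).ncard :=
        Set.ncard_le_ncard hsub (Set.toFinite _)
    _ ≤ (↑s : Set (Fin (n + 1) × Fin (n + 1))).ncard := Set.ncard_image_le (Set.toFinite _)
    _ = s.card := Set.ncard_coe_finset _

lemma ltP_two (n : ℕ) :
    2 * ((univ : Finset (Fin (n + 1) × Fin (n + 1))).filter fun z => z.1 < z.2).card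
      = (n + 1) * n := by
  classical
  set ltP := (univ : Finset (Fin (n + 1) × Fin (n + 1))).filter fun z => z.1 < z.2 with hlt_def
  set gtP := (univ : Finset (Fin (n + 1) × Fin (n + 1))).filter fun z => z.2 < z.1 with hgt_def
  have hdisj : Disjoint ltP gtP := by
    rw [Finset.disjoint_left]
    intro z h1 h2
    rw [hlt_def, mem_filter] at h1
    rw [hgt_def, mem_filter] at h2
    exact absurd h2.2 (lt_asymm h1.2)
  have hunion : ltP ∪ gtP = (univ : Finset (Fin (n + 1))).offDiag := by
    ext z
    rw [mem_union, hlt_def, hgt_def, mem_filter, mem_filter, Finset.mem_offDiag]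
    constructor
    · rintro (⟨-, h⟩ | ⟨-, h⟩)
      · exact ⟨mem_univ _, mem_univ _, ne_of_lt h⟩
      · exact ⟨mem_univ _, mem_univ _, (ne_of_lt h).symm⟩
    · rintro ⟨-, -, h⟩
      rcases lt_or_gt_of_ne h with h' | h'
      · exact Or.inl ⟨mem_univ _, h'⟩
      · exact Or.inr ⟨mem_univ _, h'⟩
  have hcards : gtP.card = ltP.card := by
    refine Finset.card_bij' (fun z _ => (z.2, z.1)) (fun z _ => (z.2, z.1)) ?_ ?_ ?_ ?_
    · intro z hz
      rw [hgt_def, mem_filter] at hz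
      rw [hlt_def, mem_filter]
      exact ⟨mem_univ _, hz.2⟩
    · intro z hz
      rw [hlt_def, mem_filter] at hz
      rw [hgt_def, mem_filter]
      exact ⟨mem_univ _, hz.2⟩
    · intro z _; rfl
    · intro z _; rfl
  have hoff : ((univ : Finset (Fin (n + 1))).offDiag).card = (n + 1) * n := by
    rw [Finset.offDiag_card, card_univ, Fintype.card_fin]
    exact Nat.sub_eq_of_eq_add (by ring)
  have hu := Finset.card_union_of_disjoint hdisj
  rw [hunion, hoff, hcards] at hu
  omega

/-- for `k ≥ 2`, `n ≥ 1`, `a = (n+1)^((k−1)/(k+1))` and partitions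
`P_1, …, P_k` of `{0,1,…,n}` all of whose parts have size `< a`, the sum over
all `k`-tuples of permutations `σ` of `{0,1,…,n}` of the number of unordered
pairs `{x,y}` of distinct elements with `σ_i(x), σ_i(y)` in the same part of
`P_i` for every `i`, is strictly less than `n^(2/(k+1))·((n+1)!)^k`. -/
theorem sum_bad_pairs_lt (k n : ℕ) (hk : 2 ≤ k) (hn : 1 ≤ n)
    (a : ℝ) (ha : a = ((n : ℝ) + 1) ^ (((k : ℝ) - 1) / ((k : ℝ) + 1)))
    (P : Fin k → Finpartition (Finset.univ : Finset (Fin (n + 1))))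
    (hP : ∀ i : Fin k, ∀ p ∈ (P i).parts, ((p.card : ℝ) < a)) :
    (∑ σ : Fin k → Equiv.Perm (Fin (n + 1)),
        ({q : Sym2 (Fin (n + 1)) | ∃ x y : Fin (n + 1), q = s(x, y) ∧ x ≠ y ∧
          ∀ i : Fin k, ∃ p ∈ (P i).parts, σ i x ∈ p ∧ σ i y ∈ p}.ncard : ℝ))
      < (n : ℝ) ^ ((2 : ℝ) / ((k : ℝ) + 1)) * (Nat.factorial (n + 1) : ℝ) ^ k := by
  classical
  have hkR : (2 : ℝ) ≤ (k : ℝ) := by exact_mod_cast hk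
  have hnR : (1 : ℝ) ≤ (n : ℝ) := by exact_mod_cast hn
  have hn0 : (0 : ℝ) < (n : ℝ) := by linarith
  obtain ⟨t, ht_def⟩ : ∃ t : ℝ, t = ((k : ℝ) - 1) / ((k : ℝ) + 1) := ⟨_, rfl⟩
  have ht0 : 0 < t := by
    rw [ht_def]; apply div_pos <;> linarith
  have ht1 : t < 1 := by
    rw [ht_def, div_lt_one (by linarith)]; linarith
  have ha' : a = ((n : ℝ) + 1) ^ t := by rw [ht_def]; exact ha
  have ha1 : 1 ≤ a := by
    rw [ha']; exact Real.one_le_rpow (by linarith) (le_of_lt ht0)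
  have hkey : a - 1 < (n : ℝ) ^ t := by
    have := key_real hnR ht0 ht1
    rw [ha']; linarith
  set F : ℝ := (Nat.factorial (n + 1) : ℝ) with hF_def
  have hF0 : 0 < F := by positivity
  set ltP := (univ : Finset (Fin (n + 1) × Fin (n + 1))).filter fun z => z.1 < z.2 with hltP_def
  -- swap the two sums (at ℕ level)
  have swap : ∑ σ : Fin k → Perm (Fin (n + 1)),
        (ltP.filter fun z => ∀ i : Fin k, ∃ p ∈ (P i).parts, σ i z.1 ∈ p ∧ σ i z.2 ∈ p).card
      = ∑ z ∈ ltP, (univ.filter fun σ : Fin k → Perm (Fin (n + 1)) =>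
          ∀ i : Fin k, ∃ p ∈ (P i).parts, σ i z.1 ∈ p ∧ σ i z.2 ∈ p).card := by
    simp only [Finset.card_filter]
    exact Finset.sum_comm
  have perz : ∀ z ∈ ltP, ((univ.filter fun σ : Fin k → Perm (Fin (n + 1)) =>
        ∀ i : Fin k, ∃ p ∈ (P i).parts, σ i z.1 ∈ p ∧ σ i z.2 ∈ p).card : ℝ)
      ≤ ((a - 1) * F / n) ^ k := by
    intro z hz
    have hz' := hz
    rw [hltP_def] at hz'
    have hz12 : z.1 ≠ z.2 := ne_of_lt (mem_filter.mp hz').2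
    exact pair_bound k n hn a ha1 P hP z hz12
  have hltPR : (ltP.card : ℝ) = ((n : ℝ) + 1) * n / 2 := by
    have h2 : ((2 * ltP.card : ℕ) : ℝ) = (((n + 1) * n : ℕ) : ℝ) := by
      exact_mod_cast congrArg (Nat.cast (R := ℝ)) (ltP_two n)
    push_cast at h2
    linarith
  -- final real computation
  obtain ⟨u, hu_def⟩ : ∃ u : ℝ, u = (n : ℝ) ^ t := ⟨_, rfl⟩
  have hu0 : 0 < u := by rw [hu_def]; exact Real.rpow_pos_of_pos hn0 t
  rw [← hu_def] at hkey
  obtain ⟨m, hm_def⟩ : ∃ m : ℝ, m = (n : ℝ) ^ (k - 1) := ⟨_, rfl⟩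
  have hm0 : (0 : ℝ) < m := by rw [hm_def]; exact pow_pos hn0 _
  have hk1 : 1 ≤ k := le_trans one_le_two hk
  have hkk : k - 1 + 1 = k := Nat.sub_add_cancel hk1
  have hukk : u ^ (k + 1) = m := by
    rw [hu_def, hm_def, ← Real.rpow_natCast ((n : ℝ) ^ t) (k + 1),
      ← Real.rpow_natCast (n : ℝ) (k - 1), ← Real.rpow_mul hn0.le]
    congr 1
    have hkne : (k : ℝ) + 1 ≠ 0 := by positivity
    push_cast [Nat.cast_sub hk1]
    rw [ht_def]
    field_simp
  have hrhs : (n : ℝ) ^ ((2 : ℝ) / ((k : ℝ) + 1)) = (n : ℝ) / u := by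
    have h2t : (2 : ℝ) / ((k : ℝ) + 1) = 1 - t := by
      rw [ht_def]
      have hkne : (k : ℝ) + 1 ≠ 0 := by positivity
      field_simp
      ring
    rw [h2t, Real.rpow_sub hn0, Real.rpow_one, hu_def]
  have hnk : (n : ℝ) ^ k = m * n := by
    rw [hm_def, ← pow_succ, hkk]
  have hbase : (0 : ℝ) ≤ (a - 1) * F / n :=
    div_nonneg (mul_nonneg (by linarith) hF0.le) hn0.le
  have hstep : ((a - 1) * F / n) ^ k < (u * F / n) ^ k := by
    apply pow_lt_pow_left₀ _ hbase (Nat.one_le_iff_ne_zero.mp hk1)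
    rw [mul_div_assoc, mul_div_assoc]
    exact mul_lt_mul_of_pos_right hkey (by positivity)
  have hfinal : (((n : ℝ) + 1) * n / 2) * (u * F / n) ^ k ≤ (n : ℝ) * F ^ k / u := by
    rw [le_div_iff₀ hu0]
    calc (((n : ℝ) + 1) * n / 2) * (u * F / n) ^ k * u
        = (((n : ℝ) + 1) * n / 2) * (u ^ k * F ^ k / (m * n)) * u := by
          rw [div_pow, mul_pow, hnk]
      _ = (((n : ℝ) + 1) / 2 * F ^ k) * ((u ^ k * u) / m) := by
          field_simp
      _ = (((n : ℝ) + 1) / 2 * F ^ k) := by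
          rw [← pow_succ, hukk, div_self hm0.ne', mul_one]
      _ ≤ (n : ℝ) * F ^ k := by
          nlinarith [pow_pos hF0 k]
  have hltP0 : (0 : ℝ) < (ltP.card : ℝ) := by
    rw [hltPR]; positivity
  calc (∑ σ : Fin k → Equiv.Perm (Fin (n + 1)),
        ({q : Sym2 (Fin (n + 1)) | ∃ x y : Fin (n + 1), q = s(x, y) ∧ x ≠ y ∧
          ∀ i : Fin k, ∃ p ∈ (P i).parts, σ i x ∈ p ∧ σ i y ∈ p}.ncard : ℝ))
      ≤ ∑ σ : Fin k → Perm (Fin (n + 1)),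
          ((ltP.filter fun z => ∀ i : Fin k, ∃ p ∈ (P i).parts,
            σ i z.1 ∈ p ∧ σ i z.2 ∈ p).card : ℝ) :=
        Finset.sum_le_sum (fun σ _ => by exact_mod_cast ncard_le_filter k n P σ)
    _ = ∑ z ∈ ltP, ((univ.filter fun σ : Fin k → Perm (Fin (n + 1)) =>
          ∀ i : Fin k, ∃ p ∈ (P i).parts, σ i z.1 ∈ p ∧ σ i z.2 ∈ p).card : ℝ) := by
        rw [← Nat.cast_sum, swap, Nat.cast_sum]
    _ ≤ ∑ _z ∈ ltP, ((a - 1) * F / n) ^ k := Finset.sum_le_sum perz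
    _ = (ltP.card : ℝ) * ((a - 1) * F / n) ^ k := by rw [Finset.sum_const, nsmul_eq_mul]
    _ < (ltP.card : ℝ) * (u * F / n) ^ k := mul_lt_mul_of_pos_left hstep hltP0
    _ = (((n : ℝ) + 1) * n / 2) * (u * F / n) ^ k := by rw [hltPR]
    _ ≤ (n : ℝ) * F ^ k / u := hfinal
    _ = (n : ℝ) ^ ((2 : ℝ) / ((k : ℝ) + 1)) * F ^ k := by
        rw [hrhs, div_mul_eq_mul_div]
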